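/- Let r ≥ 5 and s = ⌈r/2⌉, and let h ≥ C(r,2). For each j with 1 ≤ j ≤ s+1, let (w_1 ≥ w_2 ≥ … ≥ w_{C(r,2)}) be a non-increasing sequence of nonnegative integers summing to h, and set h_j = Σ_{ℓ=s}^{s+j-1} w_ℓ. If additionally every w_i ≥ 1, then h_j ≤ (j/(s+j-1))·(h - r(r-2)/4 + 1). -/

import Mathlib

/-- Claim 4.2 (cl:hj): bound on partial sums of the sorted multiplicity sequence. -/
theorem stmt_7 (r s h j : ℕ) (hr : 5 ≤ r) (hs : s = (r + 1) / 2)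
    (hh : r.choose 2 ≤ h) (hj1 : 1 ≤ j) (hj2 : j ≤ s + 1)
    (w : ℕ → ℕ)
    (hsorted : ∀ a b, 1 ≤ a → a ≤ b → b ≤ r.choose 2 → w b ≤ w a)
    (hge1 : ∀ ℓ, 1 ≤ ℓ → ℓ ≤ r.choose 2 → 1 ≤ w ℓ)
    (hsum : ∑ ℓ ∈ Finset.Icc 1 (r.choose 2), w ℓ = h) :
    ((∑ ℓ ∈ Finset.Icc s (s + j - 1), w ℓ : ℕ) : ℚ) ≤
      ((j : ℚ) / ((s : ℚ) + (j : ℚ) - 1)) *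
        ((h : ℚ) - (r : ℚ) * ((r : ℚ) - 2) / 4 + 1) := by
  set C := r.choose 2 with hCdef
  set m := s + j - 1 with hmdef
  have hs3 : 3 ≤ s := by omega
  have h2C : 2 * C = r * (r - 1) := by
    have he : 2 ∣ r * (r - 1) := by
      have : r * (r - 1) = (r - 1) * ((r - 1) + 1) := by
        have : (r - 1) + 1 = r := by omega
        rw [this]; ring
      rw [this]
      exact (Nat.even_mul_succ_self (r - 1)).two_dvd
    rw [hCdef, Nat.choose_two_right, Nat.mul_div_cancel' he]
  have hrC : r + 2 ≤ C := by
    obtain ⟨k, hk⟩ : ∃ k, r = k + 1 := ⟨r - 1, by omega⟩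
    subst hk
    simp only [Nat.add_sub_cancel] at h2C
    nlinarith
  have hmC : m ≤ C := by omega
  have hsC : s ≤ C := by omega
  have hsm : s ≤ m := by omega
  set H := ∑ ℓ ∈ Finset.Icc s m, w ℓ with hHdef
  set S := ∑ ℓ ∈ Finset.Icc 1 m, w ℓ with hSdef
  -- split sums
  have hIcc1 : Finset.Icc 1 m = Finset.Ioc 0 m := by
    rw [← Finset.Icc_add_one_left_eq_Ioc, zero_add]
  have hIccs : Finset.Icc s m = Finset.Ioc (s - 1) m := by
    rw [← Finset.Icc_add_one_left_eq_Ioc]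
    congr 1
    omega
  have hIcc1s : Finset.Icc 1 (s - 1) = Finset.Ioc 0 (s - 1) := by
    rw [← Finset.Icc_add_one_left_eq_Ioc, zero_add]
  have hsplit : (∑ ℓ ∈ Finset.Icc 1 (s - 1), w ℓ) + H = S := by
    rw [hHdef, hSdef, hIcc1, hIccs, hIcc1s]
    exact Finset.sum_Ioc_consecutive _ (by omega) (by omega)
  -- Inequality A : m * H ≤ j * S
  have hb1 : H ≤ j * w s := by
    have := Finset.sum_le_card_nsmul (Finset.Icc s m) w (w s) (fun x hx => by
      rw [Finset.mem_Icc] at hx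
      exact hsorted s x (by omega) hx.1 (by omega))
    have hcard : (Finset.Icc s m).card = j := by
      rw [Nat.card_Icc]; omega
    simpa [hcard, hHdef] using this
  have hb2 : (s - 1) * w s ≤ ∑ ℓ ∈ Finset.Icc 1 (s - 1), w ℓ := by
    have := Finset.card_nsmul_le_sum (Finset.Icc 1 (s - 1)) w (w s) (fun x hx => by
      rw [Finset.mem_Icc] at hx
      exact hsorted x s hx.1 (by omega) hsC)
    have hcard : (Finset.Icc 1 (s - 1)).card = s - 1 := by
      rw [Nat.card_Icc]; omega
    simpa [hcard] using this
  have hA : m * H ≤ j * S := by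
    calc m * H = (s - 1) * H + j * H := by
          rw [← Nat.add_mul]; congr 1; omega
      _ ≤ (s - 1) * (j * w s) + j * H := by
          exact Nat.add_le_add_right (Nat.mul_le_mul_left _ hb1) _
      _ = j * ((s - 1) * w s) + j * H := by ring
      _ ≤ j * (∑ ℓ ∈ Finset.Icc 1 (s - 1), w ℓ) + j * H := by
          exact Nat.add_le_add_right (Nat.mul_le_mul_left _ hb2) _
      _ = j * ((∑ ℓ ∈ Finset.Icc 1 (s - 1), w ℓ) + H) := by ring
      _ = j * S := by rw [hsplit]
  -- Inequality B : S + C ≤ h + m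
  have hsplit2 : S + (∑ ℓ ∈ Finset.Icc (m + 1) C, w ℓ) = h := by
    rw [hSdef, hIcc1, Finset.Icc_add_one_left_eq_Ioc, ← hsum]
    exact Finset.sum_Ioc_consecutive _ (by omega) hmC
  have htail : C - m ≤ ∑ ℓ ∈ Finset.Icc (m + 1) C, w ℓ := by
    have := Finset.card_nsmul_le_sum (Finset.Icc (m + 1) C) w 1 (fun x hx => by
      rw [Finset.mem_Icc] at hx
      exact hge1 x (by omega) hx.2)
    have hcard : (Finset.Icc (m + 1) C).card = C - m := by
      rw [Nat.card_Icc]; omega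
    simpa [hcard] using this
  have hB : S + C ≤ h + m := by omega
  -- move to ℚ
  have hmcast : (m : ℚ) = (s : ℚ) + (j : ℚ) - 1 := by
    have h' : m + 1 = s + j := by omega
    have := congrArg (fun n : ℕ => (n : ℚ)) h'
    push_cast at this
    linarith
  have hm0 : (0 : ℚ) < (s : ℚ) + (j : ℚ) - 1 := by
    have : (3 : ℚ) ≤ (s : ℚ) := by exact_mod_cast hs3
    have : (1 : ℚ) ≤ (j : ℚ) := by exact_mod_cast hj1
    linarith
  rw [div_mul_eq_mul_div, le_div_iff₀ hm0]
  have hA' : ((m : ℚ)) * (H : ℚ) ≤ (j : ℚ) * (S : ℚ) := by exact_mod_cast hA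
  have hB' : (S : ℚ) + (C : ℚ) ≤ (h : ℚ) + (m : ℚ) := by exact_mod_cast hB
  have h2C' : 2 * (C : ℚ) = (r : ℚ) * ((r : ℚ) - 1) := by
    have := congrArg (fun n : ℕ => (n : ℚ)) h2C
    push_cast [Nat.cast_sub (by omega : 1 ≤ r)] at this
    linarith
  have hsj : s + j ≤ r + 2 := by omega
  have hQ : (r : ℚ) * ((r : ℚ) - 2) + 4 * ((s : ℚ) + (j : ℚ) - 1) ≤
      2 * ((r : ℚ) * ((r : ℚ) - 1)) + 4 := by
    have h1 : (s : ℚ) + (j : ℚ) ≤ (r : ℚ) + 2 := by exact_mod_cast hsj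
    have h2 : (5 : ℚ) ≤ (r : ℚ) := by exact_mod_cast hr
    nlinarith
  have hSle : (S : ℚ) ≤ (h : ℚ) - (r : ℚ) * ((r : ℚ) - 2) / 4 + 1 := by
    rw [hmcast] at hB'
    linarith
  have hjS : (j : ℚ) * (S : ℚ) ≤
      (j : ℚ) * ((h : ℚ) - (r : ℚ) * ((r : ℚ) - 2) / 4 + 1) := by
    apply mul_le_mul_of_nonneg_left hSle (by positivity)
  rw [hmcast] at hA'
  linarith
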